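/- Let R be a commutative ring, R̂ = Rᵐ a finitely generated free R-module, and M₁, M₂, M₃ R-modules with Hom_R(Mᵢ, R̂) = 0 for each i. Suppose given a 3-periodic exact sequence R̂ ⊕ M₁ →^{f₁} R̂ ⊕ R̂ ⊕ M₂ →^{f₂} R̂ ⊕ M₃ →^{f₃} R̂ ⊕ M₁ → ⋯ such that the composites 0 → R̂ → R̂ ⊕ R̂ → R̂ → 0 of f₁ and f₂ with the inclusions/projections of the free summands form a short exact sequence. Then f₃ maps M₃ into M₁, f₁ restricted to M₁ followed by projection to M₂, and f₂ restricted to M₂ followed by projection to M₃, fit into an exact 3-periodic sequence M₁ → M₂ → M₃ → M₁ → ⋯. -/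

import Mathlib

/-- Lemma A.2 of the paper: in a 3-periodic exact sequence
`R̂⊕M₁ → R̂⊕R̂⊕M₂ → R̂⊕M₃ → R̂⊕M₁ → ⋯` with `Hom(Mᵢ, R̂) = 0`, if the induced
sequence of free parts `0 → R̂ → R̂⊕R̂ → R̂ → 0` is short exact, then the maps
restrict to a 3-periodic exact sequence `M₁ → M₂ → M₃ → M₁ → ⋯`. -/
theorem torsion_parts_exact
    (R : Type*) [CommRing R] (m : ℕ)
    (M₁ M₂ M₃ : Type*)
    [AddCommGroup M₁] [Module R M₁] [AddCommGroup M₂] [Module R M₂]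
    [AddCommGroup M₃] [Module R M₃]
    (hM₁ : ∀ g : M₁ →ₗ[R] (Fin m → R), g = 0)
    (hM₂ : ∀ g : M₂ →ₗ[R] (Fin m → R), g = 0)
    (hM₃ : ∀ g : M₃ →ₗ[R] (Fin m → R), g = 0)
    (f₁ : (Fin m → R) × M₁ →ₗ[R] ((Fin m → R) × (Fin m → R)) × M₂)
    (f₂ : ((Fin m → R) × (Fin m → R)) × M₂ →ₗ[R] (Fin m → R) × M₃)
    (f₃ : (Fin m → R) × M₃ →ₗ[R] (Fin m → R) × M₁)
    (h12 : Function.Exact f₁ f₂)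
    (h23 : Function.Exact f₂ f₃)
    (h31 : Function.Exact f₃ f₁)
    (g₁ : (Fin m → R) →ₗ[R] (Fin m → R) × (Fin m → R))
    (g₂ : (Fin m → R) × (Fin m → R) →ₗ[R] (Fin m → R))
    (hg₁ : g₁ = (LinearMap.fst R ((Fin m → R) × (Fin m → R)) M₂).comp
        (f₁.comp (LinearMap.inl R (Fin m → R) M₁)))
    (hg₂ : g₂ = (LinearMap.fst R (Fin m → R) M₃).comp
        (f₂.comp (LinearMap.inl R ((Fin m → R) × (Fin m → R)) M₂)))
    (hg₁inj : Function.Injective g₁)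
    (hgexact : Function.Exact g₁ g₂)
    (hg₂surj : Function.Surjective g₂) :
    (∀ z : M₃, (f₃ (0, z)).1 = 0) ∧
    Function.Exact (fun x : M₁ => (f₁ (0, x)).2) (fun y : M₂ => (f₂ ((0, 0), y)).2) ∧
    Function.Exact (fun y : M₂ => (f₂ ((0, 0), y)).2) (fun z : M₃ => (f₃ (0, z)).2) ∧
    Function.Exact (fun z : M₃ => (f₃ (0, z)).2) (fun x : M₁ => (f₁ (0, x)).2) := by

  classical
  set F := (Fin m → R)
  -- the Mᵢ-components of the maps into the free parts vanish
  have z1 : ∀ x : M₁, (f₁ (0, x)).1 = 0 := by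
    intro x
    have h1 := hM₁ ((LinearMap.fst R F F).comp ((LinearMap.fst R (F × F) M₂).comp
      (f₁.comp (LinearMap.inr R F M₁))))
    have h2 := hM₁ ((LinearMap.snd R F F).comp ((LinearMap.fst R (F × F) M₂).comp
      (f₁.comp (LinearMap.inr R F M₁))))
    have e1 := LinearMap.congr_fun h1 x
    have e2 := LinearMap.congr_fun h2 x
    simp only [LinearMap.comp_apply, LinearMap.inr_apply, LinearMap.fst_apply,
      LinearMap.snd_apply, LinearMap.zero_apply] at e1 e2
    exact Prod.ext e1 e2
  have z2 : ∀ y : M₂, (f₂ ((0, 0), y)).1 = 0 := by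
    intro y
    have h1 := hM₂ ((LinearMap.fst R F M₃).comp (f₂.comp (LinearMap.inr R (F × F) M₂)))
    have e1 := LinearMap.congr_fun h1 y
    exact e1
  have z3 : ∀ z : M₃, (f₃ (0, z)).1 = 0 := by
    intro z
    have h1 := hM₃ ((LinearMap.fst R F M₁).comp (f₃.comp (LinearMap.inr R F M₃)))
    have e1 := LinearMap.congr_fun h1 z
    simpa using e1
  -- splitting of applications
  have sp1 : ∀ (a : F) (x : M₁), f₁ (a, x) = f₁ (a, 0) + f₁ (0, x) := by
    intro a x
    rw [← map_add, Prod.mk_add_mk, add_zero, zero_add]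
  have sp2 : ∀ (ab : F × F) (y : M₂), f₂ (ab, y) = f₂ (ab, 0) + f₂ ((0, 0), y) := by
    intro ab y
    have h : ((ab, y) : (F × F) × M₂) = (ab, (0 : M₂)) + (((0, 0) : F × F), y) := by
      rw [Prod.mk_add_mk, Prod.mk_zero_zero, add_zero, zero_add]
    rw [h, map_add]
  have sp3 : ∀ (c : F) (z : M₃), f₃ (c, z) = f₃ (c, 0) + f₃ (0, z) := by
    intro c z
    rw [← map_add, Prod.mk_add_mk, add_zero, zero_add]
  have hg1a : ∀ a : F, (f₁ (a, 0)).1 = g₁ a := by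
    intro a; rw [hg₁]; rfl
  have hg2a : ∀ ab : F × F, (f₂ (ab, 0)).1 = g₂ ab := by
    intro ab; rw [hg₂]; rfl
  -- composites vanish
  have c12 : ∀ p, f₂ (f₁ p) = 0 := fun p => (h12 (f₁ p)).mpr ⟨p, rfl⟩
  have c23 : ∀ p, f₃ (f₂ p) = 0 := fun p => (h23 (f₂ p)).mpr ⟨p, rfl⟩
  have c31 : ∀ p, f₁ (f₃ p) = 0 := fun p => (h31 (f₃ p)).mpr ⟨p, rfl⟩
  -- first components
  have fst1 : ∀ (a : F) (x : M₁), (f₁ (a, x)).1 = g₁ a := by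
    intro a x
    rw [sp1 a x, Prod.fst_add, hg1a, z1, add_zero]
  have fst2 : ∀ (ab : F × F) (y : M₂), (f₂ (ab, y)).1 = g₂ ab := by
    intro ab y
    rw [sp2 ab y, Prod.fst_add, hg2a, z2, add_zero]
  have g3zero : ∀ c : F, (f₃ (c, 0)).1 = 0 := by
    intro c
    apply hg₁inj
    rw [map_zero]
    have h := c31 (c, (0 : M₃))
    have h' : (f₁ (f₃ (c, 0))).1 = g₁ ((f₃ (c, 0)).1) :=
      fst1 (f₃ (c, 0)).1 (f₃ (c, 0)).2
    rw [h, Prod.fst_zero] at h'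
    exact h'.symm
  have fst3 : ∀ (c : F) (z : M₃), (f₃ (c, z)).1 = 0 := by
    intro c z
    rw [sp3 c z, Prod.fst_add, g3zero, z3, add_zero]
  refine ⟨z3, ?_, ?_, ?_⟩
  · -- exactness M₁ → M₂ → M₃
    intro y
    constructor
    · intro hy
      have hy1 : f₂ ((0, 0), y) = 0 := Prod.ext (z2 y) hy
      obtain ⟨⟨a, x⟩, hax⟩ := (h12 ((0, 0), y)).mp hy1
      have ha : g₁ a = 0 := by
        have := fst1 a x
        rw [hax] at this
        rw [← this]
        simp
      have ha0 : a = 0 := hg₁inj (by rw [ha, map_zero])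
      rw [ha0] at hax
      exact ⟨x, by show (f₁ (0, x)).2 = y; rw [hax]⟩
    · rintro ⟨x, rfl⟩
      have h1 : f₁ (0, x) = ((0, 0), (f₁ (0, x)).2) := Prod.ext (by exact z1 x) rfl
      have h2 := c12 ((0 : F), x)
      rw [h1] at h2
      show (f₂ ((0, 0), (f₁ (0, x)).2)).2 = 0
      rw [h2]
      rfl
  · -- exactness M₂ → M₃ → M₁
    intro z
    constructor
    · intro hz
      have hz1 : f₃ (0, z) = 0 := Prod.ext (z3 z) hz
      obtain ⟨⟨⟨a, b⟩, y⟩, hab⟩ := (h23 ((0 : F), z)).mp hz1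
      have hab0 : g₂ (a, b) = 0 := by
        have := fst2 (a, b) y
        rw [hab] at this
        rw [← this]
      obtain ⟨c, hc⟩ := (hgexact (a, b)).mp hab0
      -- s₁ c := (f₁ (c, 0)).2
      have hf1c : f₁ (c, 0) = ((a, b), (f₁ (c, 0)).2) := by
        refine Prod.ext ?_ rfl
        rw [hg1a, hc]
      have hB : f₂ ((a, b), 0) + f₂ ((0, 0), (f₁ (c, 0)).2) = 0 := by
        rw [← sp2]
        have := c12 (c, (0 : M₁))
        rw [hf1c] at this
        exact this
      have hA : f₂ ((a, b), 0) + f₂ ((0, 0), y) = (0, z) := by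
        rw [← sp2, hab]
      refine ⟨y - (f₁ (c, 0)).2, ?_⟩
      have key : f₂ ((0, 0), y - (f₁ (c, 0)).2) = (0, z) := by
        have hsub : ((0, 0), y - (f₁ (c, 0)).2) =
            (((0, 0), y) : (F × F) × M₂) - ((0, 0), (f₁ (c, 0)).2) := by
          simp [Prod.mk_sub_mk]
        rw [hsub, map_sub]
        have hy' : f₂ ((0, 0), y) = (0, z) - f₂ ((a, b), 0) := by
          rw [eq_sub_iff_add_eq, add_comm]; exact hA
        have hs' : f₂ ((0, 0), (f₁ (c, 0)).2) = -f₂ ((a, b), 0) := by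
          rw [eq_neg_iff_add_eq_zero, add_comm]; exact hB
        rw [hy', hs']
        abel
      show (f₂ ((0, 0), y - (f₁ (c, 0)).2)).2 = z
      rw [key]
    · rintro ⟨y, rfl⟩
      have h1 : f₂ ((0, 0), y) = ((0 : F), (f₂ ((0, 0), y)).2) := Prod.ext (z2 y) rfl
      have h2 := c23 (((0, 0) : F × F), y)
      rw [h1] at h2
      show (f₃ (0, (f₂ ((0, 0), y)).2)).2 = 0
      rw [h2]
      rfl
  · -- exactness M₃ → M₁ → M₂
    intro x
    constructor
    · intro hx
      have hx1 : f₁ (0, x) = 0 := Prod.ext (by simpa using z1 x) hx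
      obtain ⟨⟨c, z⟩, hcz⟩ := (h31 ((0 : F), x)).mp hx1
      obtain ⟨⟨a, b⟩, hab⟩ := hg₂surj c
      -- s₂ := (f₂ ((a,b), 0)).2
      have hf2ab : f₂ ((a, b), 0) = (c, (f₂ ((a, b), 0)).2) := by
        refine Prod.ext ?_ rfl
        rw [hg2a, hab]
      have hB : f₃ (c, 0) + f₃ (0, (f₂ ((a, b), 0)).2) = 0 := by
        rw [← sp3]
        have := c23 (((a, b) : F × F), (0 : M₂))
        rw [hf2ab] at this
        exact this
      have hA : f₃ (c, 0) + f₃ (0, z) = ((0 : F), x) := by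
        rw [← sp3, hcz]
      refine ⟨z - (f₂ ((a, b), 0)).2, ?_⟩
      have key : f₃ (0, z - (f₂ ((a, b), 0)).2) = ((0 : F), x) := by
        have hsub : ((0 : F), z - (f₂ ((a, b), 0)).2) =
            (((0 : F), z) : F × M₃) - ((0 : F), (f₂ ((a, b), 0)).2) := by
          simp [Prod.mk_sub_mk]
        rw [hsub, map_sub]
        have hz' : f₃ (0, z) = ((0 : F), x) - f₃ (c, 0) := by
          rw [eq_sub_iff_add_eq, add_comm]; exact hA
        have hs' : f₃ (0, (f₂ ((a, b), 0)).2) = -f₃ (c, 0) := by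
          rw [eq_neg_iff_add_eq_zero, add_comm]; exact hB
        rw [hz', hs']
        abel
      show (f₃ (0, z - (f₂ ((a, b), 0)).2)).2 = x
      rw [key]
    · rintro ⟨z, rfl⟩
      have h1 : f₃ (0, z) = ((0 : F), (f₃ (0, z)).2) := Prod.ext (z3 z) rfl
      have h2 := c31 ((0 : F), z)
      rw [h1] at h2
      show (f₁ (0, (f₃ (0, z)).2)).2 = 0
      rw [h2]
      rfl
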